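/- Let T be the Taylor dg algebra of a squarefree monomial ideal I and let x_k be a variable. Let I_k be the Q-span of {e_U : some u ∈ U is divisible by x_k} together with {∂(e_U) : some u ∈ U divisible by x_k}. Then I_k is a dg ideal of T: it is closed under the differential and under multiplication by arbitrary elements of T. -/

import Mathlib

open Finset

/-- `σ(V,W) = |{(v,w) ∈ V × W : v > w}|`. -/
def sigmaCount {ι : Type*} [LinearOrder ι] (V W : Finset ι) : ℕ :=
  ((V ×ˢ W).filter fun p => p.2 < p.1).card

/-- The Taylor (Gemeda) product of basis elements of the Taylor complex. -/
noncomputable def taylorMul (k : Type*) [Field k] {ι σ₀ : Type*} [LinearOrder ι]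
    (u : ι → (σ₀ →₀ ℕ)) (V W : Finset ι) :
    Finset ι →₀ MvPolynomial σ₀ k :=
  if Disjoint V W then
    Finsupp.single (V ∪ W)
      ((-1 : MvPolynomial σ₀ k) ^ sigmaCount V W *
        MvPolynomial.monomial (V.sup u + W.sup u - (V ∪ W).sup u) 1)
  else 0

/-- Bilinear extension of the Taylor product to the whole Taylor complex. -/
noncomputable def taylorProd (k : Type*) [Field k] {ι σ₀ : Type*} [LinearOrder ι]
    (u : ι → (σ₀ →₀ ℕ)) (x y : Finset ι →₀ MvPolynomial σ₀ k) :
    Finset ι →₀ MvPolynomial σ₀ k :=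
  x.sum fun V cV => y.sum fun W cW => (cV * cW) • taylorMul k u V W

/-- The Taylor differential on a basis element:
`∂(e_U) = Σ_{v∈U} (−1)^{σ(v,U)} (m_U / m_{U∖v}) e_{U∖v}`. -/
noncomputable def taylorD (k : Type*) [Field k] {ι σ₀ : Type*} [LinearOrder ι]
    (u : ι → (σ₀ →₀ ℕ)) (U : Finset ι) :
    Finset ι →₀ MvPolynomial σ₀ k :=
  ∑ v ∈ U,
    ((-1 : MvPolynomial σ₀ k) ^ ((U.filter fun w => w < v).card)) •
      Finsupp.single (U.erase v)
        (MvPolynomial.monomial (U.sup u - (U.erase v).sup u) 1)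

/-- Linear extension of the Taylor differential to the whole Taylor complex. -/
noncomputable def taylorDiff (k : Type*) [Field k] {ι σ₀ : Type*} [LinearOrder ι]
    (u : ι → (σ₀ →₀ ℕ)) (x : Finset ι →₀ MvPolynomial σ₀ k) :
    Finset ι →₀ MvPolynomial σ₀ k :=
  x.sum fun U c => c • taylorD k u U

namespace Stmt11

set_option linter.unusedSectionVars false

section Arith
variable {ι σ₀ : Type*} [LinearOrder ι]

lemma sup_apply_nat (u : ι → (σ₀ →₀ ℕ)) (s : Finset ι) (i : σ₀) :
    (s.sup u) i = s.sup fun j => u j i :=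
  Finset.comp_sup_eq_sup_comp (fun f : σ₀ →₀ ℕ => f i) (fun a b => Finsupp.sup_apply a b i) rfl

lemma arithE (u : ι → (σ₀ →₀ ℕ)) (V U : Finset ι) (w : ι) :
    (U.sup u - (U.erase w).sup u) + (V.sup u + (U.erase w).sup u - (V ∪ U.erase w).sup u)
      = (V.sup u + U.sup u - (V ∪ U).sup u) + ((V ∪ U).sup u - (V ∪ U.erase w).sup u) := by
  ext i
  have hb : (U.erase w).sup (fun j => u j i) ≤ U.sup (fun j => u j i) :=
    Finset.sup_mono (Finset.erase_subset _ _)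
  simp only [Finsupp.add_apply, Finsupp.tsub_apply, Finsupp.sup_apply, sup_apply_nat,
    Finset.sup_union]
  omega

lemma arithG (u : ι → (σ₀ →₀ ℕ)) (U : Finset ι) (w t : ι) :
    (U.sup u - (U.erase w).sup u) + ((U.erase w).sup u - ((U.erase t).erase w).sup u)
      = (U.sup u - (U.erase t).sup u) + ((U.erase t).sup u - ((U.erase t).erase w).sup u) := by
  ext i
  have h1 : (U.erase w).sup (fun j => u j i) ≤ U.sup (fun j => u j i) :=
    Finset.sup_mono (Finset.erase_subset _ _)
  have h3 : (U.erase t).sup (fun j => u j i) ≤ U.sup (fun j => u j i) :=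
    Finset.sup_mono (Finset.erase_subset _ _)
  have h4 : ((U.erase t).erase w).sup (fun j => u j i) ≤ (U.erase t).sup (fun j => u j i) :=
    Finset.sup_mono (Finset.erase_subset _ _)
  have h2 : ((U.erase t).erase w).sup (fun j => u j i) ≤ (U.erase w).sup (fun j => u j i) := by
    refine Finset.sup_mono ?_
    rw [Finset.erase_right_comm]
    exact Finset.erase_subset _ _
  simp only [Finsupp.add_apply, Finsupp.tsub_apply, Finsupp.sup_apply, sup_apply_nat]
  omega

end Arith

section Mem

variable (k : Type*) [Field k] {ι σ₀ : Type*} [LinearOrder ι]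
  (u : ι → (σ₀ →₀ ℕ)) (κ : σ₀)

/-- The generating set of `I_κ`. -/
def gens : Set (Finset ι →₀ MvPolynomial σ₀ k) :=
  ((fun U => Finsupp.single U (1 : MvPolynomial σ₀ k)) ''
      {U : Finset ι | ∃ j ∈ U, u j κ ≠ 0}) ∪
    ((taylorD k u) '' {U : Finset ι | ∃ j ∈ U, u j κ ≠ 0})

lemma memA {W : Finset ι} (hW : ∃ j ∈ W, u j κ ≠ 0) (p : MvPolynomial σ₀ k) :
    Finsupp.single W p ∈ Submodule.span (MvPolynomial σ₀ k) (gens k u κ) := by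
  have h1 : Finsupp.single W (1 : MvPolynomial σ₀ k) ∈ gens k u κ := Or.inl ⟨W, hW, rfl⟩
  have h2 := Submodule.smul_mem (Submodule.span (MvPolynomial σ₀ k) (gens k u κ)) p
    (Submodule.subset_span h1)
  rwa [Finsupp.smul_single', mul_one] at h2

lemma memB {X : Finset ι} {w : ι} (hw : w ∈ X) (hκ : u w κ ≠ 0) (p : MvPolynomial σ₀ k) :
    Finsupp.single (X.erase w)
      (p * MvPolynomial.monomial (X.sup u - (X.erase w).sup u) 1)
      ∈ Submodule.span (MvPolynomial σ₀ k) (gens k u κ) := by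
  set Sp := Submodule.span (MvPolynomial σ₀ k) (gens k u κ) with hSp
  set f : ι → (Finset ι →₀ MvPolynomial σ₀ k) := fun v =>
    ((-1 : MvPolynomial σ₀ k) ^ ((X.filter fun x => x < v).card)) •
      Finsupp.single (X.erase v)
        (MvPolynomial.monomial (X.sup u - (X.erase v).sup u) 1) with hf
  have hXmem : taylorD k u X ∈ Sp := Submodule.subset_span (Or.inr ⟨X, ⟨w, hw, hκ⟩, rfl⟩)
  have hXsum : taylorD k u X = ∑ v ∈ X, f v := rfl
  have hsum : ∑ v ∈ X.erase w, f v + f w = taylorD k u X := by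
    rw [hXsum]; exact Finset.sum_erase_add X f hw
  have hfw : f w ∈ Sp := by
    have heq : f w = taylorD k u X - ∑ v ∈ X.erase w, f v := by
      rw [← hsum, add_sub_cancel_left]
    rw [heq]
    refine Submodule.sub_mem _ hXmem (Submodule.sum_mem _ fun v hv => ?_)
    refine Submodule.smul_mem _ _ (memA k u κ ?_ _)
    exact ⟨w, Finset.mem_erase.mpr ⟨(Finset.ne_of_mem_erase hv).symm, hw⟩, hκ⟩
  have hsingle : Finsupp.single (X.erase w)
      (MvPolynomial.monomial (X.sup u - (X.erase w).sup u) (1 : k)) ∈ Sp := by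
    have h2 : ((-1 : MvPolynomial σ₀ k) ^ ((X.filter fun x => x < w).card)) • f w ∈ Sp :=
      Submodule.smul_mem _ _ hfw
    rw [hf] at h2
    simp only at h2
    rwa [smul_smul, ← mul_pow, neg_mul_neg, one_mul, one_pow, one_smul] at h2
  have h3 := Submodule.smul_mem Sp p hsingle
  rwa [Finsupp.smul_single'] at h3

lemma memSingleKey {U : Finset ι} (hU : ∃ j ∈ U, u j κ ≠ 0) {w : ι} (hw : w ∈ U)
    (V : Finset ι) (c : MvPolynomial σ₀ k) :
    Finsupp.single (V ∪ U.erase w)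
      (c * MvPolynomial.monomial
        ((U.sup u - (U.erase w).sup u) +
          (V.sup u + (U.erase w).sup u - (V ∪ U.erase w).sup u)) (1 : k))
      ∈ Submodule.span (MvPolynomial σ₀ k) (gens k u κ) := by
  by_cases hS : ∃ j ∈ V ∪ U.erase w, u j κ ≠ 0
  · exact memA k u κ hS _
  · push_neg at hS
    obtain ⟨j, hj, hjκ⟩ := hU
    have hjw : j = w := by
      by_contra hne
      exact hjκ (hS j (Finset.mem_union_right _ (Finset.mem_erase.mpr ⟨hne, hj⟩)))
    subst hjw
    have hwV : j ∉ V := fun h => hjκ (hS j (Finset.mem_union_left _ h))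
    have hXe : (V ∪ U).erase j = V ∪ U.erase j := by
      rw [Finset.erase_union_distrib, Finset.erase_eq_of_notMem hwV]
    have hmem := memB k u κ (X := V ∪ U) (w := j) (Finset.mem_union_right _ hj) hjκ
        (c * MvPolynomial.monomial (V.sup u + U.sup u - (V ∪ U).sup u) (1 : k))
    rw [hXe] at hmem
    rwa [mul_assoc, MvPolynomial.monomial_mul, one_mul, ← arithE u V U j] at hmem

lemma memDtermR {U : Finset ι} (hU : ∃ j ∈ U, u j κ ≠ 0) {w : ι} (hw : w ∈ U)
    (V : Finset ι) (c : MvPolynomial σ₀ k) :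
    (c * MvPolynomial.monomial (U.sup u - (U.erase w).sup u) (1 : k)) • taylorMul k u V (U.erase w)
      ∈ Submodule.span (MvPolynomial σ₀ k) (gens k u κ) := by
  unfold taylorMul
  split_ifs with hd
  · rw [Finsupp.smul_single']
    have hc : (c * MvPolynomial.monomial (U.sup u - (U.erase w).sup u) (1 : k)) *
        ((-1 : MvPolynomial σ₀ k) ^ sigmaCount V (U.erase w) *
          MvPolynomial.monomial (V.sup u + (U.erase w).sup u - (V ∪ U.erase w).sup u) (1 : k))
        = (c * (-1 : MvPolynomial σ₀ k) ^ sigmaCount V (U.erase w)) *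
          MvPolynomial.monomial
            ((U.sup u - (U.erase w).sup u) +
              (V.sup u + (U.erase w).sup u - (V ∪ U.erase w).sup u)) (1 : k) := by
      rw [mul_mul_mul_comm, MvPolynomial.monomial_mul, one_mul]
    rw [hc]
    exact memSingleKey k u κ hU hw V _
  · rw [smul_zero]
    exact Submodule.zero_mem _

lemma memDtermL {U : Finset ι} (hU : ∃ j ∈ U, u j κ ≠ 0) {w : ι} (hw : w ∈ U)
    (V : Finset ι) (c : MvPolynomial σ₀ k) :
    (c * MvPolynomial.monomial (U.sup u - (U.erase w).sup u) (1 : k)) • taylorMul k u (U.erase w) V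
      ∈ Submodule.span (MvPolynomial σ₀ k) (gens k u κ) := by
  unfold taylorMul
  split_ifs with hd
  · rw [Finsupp.smul_single', Finset.union_comm (U.erase w) V,
      add_comm ((U.erase w).sup u) (V.sup u)]
    have hc : (c * MvPolynomial.monomial (U.sup u - (U.erase w).sup u) (1 : k)) *
        ((-1 : MvPolynomial σ₀ k) ^ sigmaCount (U.erase w) V *
          MvPolynomial.monomial (V.sup u + (U.erase w).sup u - (V ∪ U.erase w).sup u) (1 : k))
        = (c * (-1 : MvPolynomial σ₀ k) ^ sigmaCount (U.erase w) V) *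
          MvPolynomial.monomial
            ((U.sup u - (U.erase w).sup u) +
              (V.sup u + (U.erase w).sup u - (V ∪ U.erase w).sup u)) (1 : k) := by
      rw [mul_mul_mul_comm, MvPolynomial.monomial_mul, one_mul]
    rw [hc]
    exact memSingleKey k u κ hU hw V _
  · rw [smul_zero]
    exact Submodule.zero_mem _

lemma memDiffKey {U : Finset ι} {w t : ι} (hw : w ∈ U) (hwκ : u w κ ≠ 0)
    (ht : t ∈ U.erase w) (c : MvPolynomial σ₀ k) :
    Finsupp.single ((U.erase w).erase t)
      (c * MvPolynomial.monomial
        ((U.sup u - (U.erase w).sup u) +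
          ((U.erase w).sup u - ((U.erase w).erase t).sup u)) (1 : k))
      ∈ Submodule.span (MvPolynomial σ₀ k) (gens k u κ) := by
  have htw : t ≠ w := Finset.ne_of_mem_erase ht
  have hcomm : (U.erase w).erase t = (U.erase t).erase w := Finset.erase_right_comm
  rw [hcomm, arithG u U w t]
  have hwt : w ∈ U.erase t := Finset.mem_erase.mpr ⟨htw.symm, hw⟩
  have hmem := memB k u κ hwt hwκ
    (c * MvPolynomial.monomial (U.sup u - (U.erase t).sup u) (1 : k))
  rwa [mul_assoc, MvPolynomial.monomial_mul, one_mul] at hmem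

lemma taylorDiff_single (U : Finset ι) (c : MvPolynomial σ₀ k) :
    taylorDiff k u (Finsupp.single U c) = c • taylorD k u U := by
  unfold taylorDiff
  exact Finsupp.sum_single_index (zero_smul _ _)

lemma taylorDiff_add (x y : Finset ι →₀ MvPolynomial σ₀ k) :
    taylorDiff k u (x + y) = taylorDiff k u x + taylorDiff k u y := by
  unfold taylorDiff
  exact Finsupp.sum_add_index' (fun U => zero_smul _ _) (fun U b₁ b₂ => add_smul _ _ _)

lemma taylorDiff_smul (c : MvPolynomial σ₀ k) (x : Finset ι →₀ MvPolynomial σ₀ k) :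
    taylorDiff k u (c • x) = c • taylorDiff k u x := by
  unfold taylorDiff
  rw [Finsupp.sum_smul_index' (g := x) (b := c) (h := fun U d => d • taylorD k u U)
    (fun U => zero_smul _ _), Finsupp.smul_sum]
  exact Finsupp.sum_congr fun U _ => by rw [smul_eq_mul, smul_smul]

lemma taylorDiff_zero : taylorDiff k u (0 : Finset ι →₀ MvPolynomial σ₀ k) = 0 := by
  unfold taylorDiff
  exact Finsupp.sum_zero_index

noncomputable def diffMap :
    (Finset ι →₀ MvPolynomial σ₀ k) →ₗ[MvPolynomial σ₀ k] (Finset ι →₀ MvPolynomial σ₀ k) where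
  toFun := taylorDiff k u
  map_add' := taylorDiff_add k u
  map_smul' := taylorDiff_smul k u

lemma taylorProd_zero_right (x : Finset ι →₀ MvPolynomial σ₀ k) :
    taylorProd k u x 0 = 0 := by
  unfold taylorProd
  simp [Finsupp.sum_zero_index]

lemma taylorProd_zero_left (y : Finset ι →₀ MvPolynomial σ₀ k) :
    taylorProd k u 0 y = 0 := by
  unfold taylorProd
  simp [Finsupp.sum_zero_index]

lemma taylorProd_add_right (x y₁ y₂ : Finset ι →₀ MvPolynomial σ₀ k) :
    taylorProd k u x (y₁ + y₂) = taylorProd k u x y₁ + taylorProd k u x y₂ := by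
  unfold taylorProd
  rw [← Finsupp.sum_add]
  exact Finsupp.sum_congr fun V _ =>
    Finsupp.sum_add_index' (fun W => by simp) (fun W b₁ b₂ => by rw [mul_add, add_smul])

lemma taylorProd_smul_right (c : MvPolynomial σ₀ k) (x y : Finset ι →₀ MvPolynomial σ₀ k) :
    taylorProd k u x (c • y) = c • taylorProd k u x y := by
  unfold taylorProd
  rw [Finsupp.smul_sum]
  refine Finsupp.sum_congr fun V _ => ?_
  rw [Finsupp.sum_smul_index' (g := y) (b := c)
    (h := fun W cW => (x V * cW) • taylorMul k u V W) (fun W => by simp), Finsupp.smul_sum]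
  refine Finsupp.sum_congr fun W _ => ?_
  simp only [smul_eq_mul, smul_smul]
  congr 1
  ring

lemma taylorProd_add_left (x₁ x₂ y : Finset ι →₀ MvPolynomial σ₀ k) :
    taylorProd k u (x₁ + x₂) y = taylorProd k u x₁ y + taylorProd k u x₂ y := by
  unfold taylorProd
  refine Finsupp.sum_add_index' (fun V => by simp) (fun V b₁ b₂ => ?_)
  rw [← Finsupp.sum_add]
  exact Finsupp.sum_congr fun W _ => by rw [add_mul, add_smul]

lemma taylorProd_smul_left (c : MvPolynomial σ₀ k) (x y : Finset ι →₀ MvPolynomial σ₀ k) :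
    taylorProd k u (c • x) y = c • taylorProd k u x y := by
  unfold taylorProd
  rw [Finsupp.sum_smul_index' (g := x) (b := c)
    (h := fun V cV => y.sum fun W cW => (cV * cW) • taylorMul k u V W)
    (fun V => by simp), Finsupp.smul_sum]
  refine Finsupp.sum_congr fun V _ => ?_
  rw [Finsupp.smul_sum]
  refine Finsupp.sum_congr fun W _ => ?_
  simp only [smul_eq_mul, smul_smul]
  congr 1
  ring

lemma taylorProd_single_left (V : Finset ι) (c : MvPolynomial σ₀ k)
    (y : Finset ι →₀ MvPolynomial σ₀ k) :
    taylorProd k u (Finsupp.single V c) y = y.sum fun W d => (c * d) • taylorMul k u V W := by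
  unfold taylorProd
  exact Finsupp.sum_single_index (by simp)

lemma taylorProd_single_right (x : Finset ι →₀ MvPolynomial σ₀ k) (W : Finset ι)
    (d : MvPolynomial σ₀ k) :
    taylorProd k u x (Finsupp.single W d) = x.sum fun V c => (c * d) • taylorMul k u V W := by
  unfold taylorProd
  exact Finsupp.sum_congr fun V _ => Finsupp.sum_single_index (by simp)

noncomputable def mulLeftMap (x : Finset ι →₀ MvPolynomial σ₀ k) :
    (Finset ι →₀ MvPolynomial σ₀ k) →ₗ[MvPolynomial σ₀ k] (Finset ι →₀ MvPolynomial σ₀ k) where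
  toFun y := taylorProd k u x y
  map_add' := taylorProd_add_right k u x
  map_smul' c y := taylorProd_smul_right k u c x y

noncomputable def mulRightMap (y : Finset ι →₀ MvPolynomial σ₀ k) :
    (Finset ι →₀ MvPolynomial σ₀ k) →ₗ[MvPolynomial σ₀ k] (Finset ι →₀ MvPolynomial σ₀ k) where
  toFun x := taylorProd k u x y
  map_add' x₁ x₂ := taylorProd_add_left k u x₁ x₂ y
  map_smul' c x := taylorProd_smul_left k u c x y

lemma taylorProd_sum_right (x : Finset ι →₀ MvPolynomial σ₀ k) {α : Type*} (s : Finset α)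
    (f : α → (Finset ι →₀ MvPolynomial σ₀ k)) :
    taylorProd k u x (∑ i ∈ s, f i) = ∑ i ∈ s, taylorProd k u x (f i) :=
  map_sum (mulLeftMap k u x) f s

lemma taylorProd_sum_left (y : Finset ι →₀ MvPolynomial σ₀ k) {α : Type*} (s : Finset α)
    (f : α → (Finset ι →₀ MvPolynomial σ₀ k)) :
    taylorProd k u (∑ i ∈ s, f i) y = ∑ i ∈ s, taylorProd k u (f i) y :=
  map_sum (mulRightMap k u y) f s

lemma taylorDiff_sum {α : Type*} (s : Finset α) (f : α → (Finset ι →₀ MvPolynomial σ₀ k)) :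
    taylorDiff k u (∑ i ∈ s, f i) = ∑ i ∈ s, taylorDiff k u (f i) :=
  map_sum (diffMap k u) f s

lemma memMulGen {V W : Finset ι} (h : ∃ j ∈ V ∪ W, u j κ ≠ 0) (c : MvPolynomial σ₀ k) :
    c • taylorMul k u V W ∈ Submodule.span (MvPolynomial σ₀ k) (gens k u κ) := by
  unfold taylorMul
  split_ifs with hd
  · rw [Finsupp.smul_single']
    exact memA k u κ h _
  · rw [smul_zero]
    exact Submodule.zero_mem _

lemma mem_prod_single (x : Finset ι →₀ MvPolynomial σ₀ k) {W : Finset ι}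
    (hW : ∃ j ∈ W, u j κ ≠ 0) (d : MvPolynomial σ₀ k) :
    taylorProd k u x (Finsupp.single W d) ∈ Submodule.span (MvPolynomial σ₀ k) (gens k u κ) ∧
      taylorProd k u (Finsupp.single W d) x ∈ Submodule.span (MvPolynomial σ₀ k) (gens k u κ) := by
  obtain ⟨j, hj, hjκ⟩ := hW
  constructor
  · rw [taylorProd_single_right]
    exact Submodule.sum_mem _ fun V _ =>
      memMulGen k u κ ⟨j, Finset.mem_union_right _ hj, hjκ⟩ _
  · rw [taylorProd_single_left]
    exact Submodule.sum_mem _ fun V _ =>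
      memMulGen k u κ ⟨j, Finset.mem_union_left _ hj, hjκ⟩ _

lemma mem_prod_taylorD_right (x : Finset ι →₀ MvPolynomial σ₀ k) {U : Finset ι}
    (hU : ∃ j ∈ U, u j κ ≠ 0) :
    taylorProd k u x (taylorD k u U) ∈ Submodule.span (MvPolynomial σ₀ k) (gens k u κ) := by
  unfold taylorD
  rw [taylorProd_sum_right]
  refine Submodule.sum_mem _ fun w hw => ?_
  rw [taylorProd_smul_right, taylorProd_single_right]
  refine Submodule.smul_mem _ _ (Submodule.sum_mem _ fun V _ => ?_)
  exact memDtermR k u κ hU hw V (x V)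

lemma mem_prod_taylorD_left (x : Finset ι →₀ MvPolynomial σ₀ k) {U : Finset ι}
    (hU : ∃ j ∈ U, u j κ ≠ 0) :
    taylorProd k u (taylorD k u U) x ∈ Submodule.span (MvPolynomial σ₀ k) (gens k u κ) := by
  unfold taylorD
  rw [taylorProd_sum_left]
  refine Submodule.sum_mem _ fun w hw => ?_
  rw [taylorProd_smul_left, taylorProd_single_left]
  refine Submodule.smul_mem _ _ (Submodule.sum_mem _ fun W _ => ?_)
  beta_reduce
  rw [mul_comm]
  exact memDtermL k u κ hU hw W (x W)

lemma mem_diff_taylorD {U : Finset ι} (hU : ∃ j ∈ U, u j κ ≠ 0) :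
    taylorDiff k u (taylorD k u U) ∈ Submodule.span (MvPolynomial σ₀ k) (gens k u κ) := by
  unfold taylorD
  rw [taylorDiff_sum]
  refine Submodule.sum_mem _ fun w hw => ?_
  rw [taylorDiff_smul, taylorDiff_single]
  refine Submodule.smul_mem _ _ ?_
  by_cases hS : ∃ j ∈ U.erase w, u j κ ≠ 0
  · exact Submodule.smul_mem _ _ (Submodule.subset_span (Or.inr ⟨U.erase w, hS, rfl⟩))
  · push_neg at hS
    obtain ⟨j, hj, hjκ⟩ := hU
    have hjw : j = w := by
      by_contra hne
      exact hjκ (hS j (Finset.mem_erase.mpr ⟨hne, hj⟩))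
    subst hjw
    unfold taylorD
    rw [Finset.smul_sum]
    refine Submodule.sum_mem _ fun t ht => ?_
    rw [smul_smul, Finsupp.smul_single']
    have hc : (MvPolynomial.monomial (U.sup u - (U.erase j).sup u) (1 : k) *
        (-1 : MvPolynomial σ₀ k) ^ (((U.erase j).filter fun x => x < t).card)) *
        MvPolynomial.monomial ((U.erase j).sup u - ((U.erase j).erase t).sup u) (1 : k)
        = ((-1 : MvPolynomial σ₀ k) ^ (((U.erase j).filter fun x => x < t).card)) *
          MvPolynomial.monomial ((U.sup u - (U.erase j).sup u) +
            ((U.erase j).sup u - ((U.erase j).erase t).sup u)) (1 : k) := by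
      rw [mul_comm (MvPolynomial.monomial (U.sup u - (U.erase j).sup u) (1 : k)) _, mul_assoc,
        MvPolynomial.monomial_mul, one_mul]
    rw [hc]
    exact memDiffKey k u κ hj hjκ ht _

end Mem

end Stmt11

/-- for a squarefree monomial ideal with (distinct) generators
`u j` and a variable `x_κ`, the span `I_κ` of the basis elements `e_U` with some
generator in `U` divisible by `x_κ`, together with their differentials `∂(e_U)`,
is a dg ideal of the Taylor dg algebra: it is closed under the differential and
under multiplication by arbitrary elements. -/
theorem stmt11 (k : Type*) [Field k] {ι σ₀ : Type*} [LinearOrder ι] [Fintype ι]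
    (u : ι → (σ₀ →₀ ℕ)) (hu : Function.Injective u)
    (hsf : ∀ j i, u j i ≤ 1) (κ : σ₀)
    (Ik : Submodule (MvPolynomial σ₀ k) (Finset ι →₀ MvPolynomial σ₀ k))
    (hIk : Ik = Submodule.span (MvPolynomial σ₀ k)
      (((fun U => Finsupp.single U (1 : MvPolynomial σ₀ k)) ''
          {U : Finset ι | ∃ j ∈ U, u j κ ≠ 0}) ∪
        ((taylorD k u) '' {U : Finset ι | ∃ j ∈ U, u j κ ≠ 0}))) :
    (∀ x ∈ Ik, taylorDiff k u x ∈ Ik) ∧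
    (∀ x y : Finset ι →₀ MvPolynomial σ₀ k, y ∈ Ik →
      taylorProd k u x y ∈ Ik ∧ taylorProd k u y x ∈ Ik) := by
  have hIk' : Ik = Submodule.span (MvPolynomial σ₀ k) (Stmt11.gens k u κ) := hIk
  subst hIk'
  constructor
  · intro x hx
    induction hx using Submodule.span_induction with
    | mem z hz =>
      rcases hz with ⟨U, hU, rfl⟩ | ⟨U, hU, rfl⟩
      · rw [Stmt11.taylorDiff_single, one_smul]
        exact Submodule.subset_span (Or.inr ⟨U, hU, rfl⟩)
      · exact Stmt11.mem_diff_taylorD k u κ hU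
    | zero =>
      rw [Stmt11.taylorDiff_zero]
      exact Submodule.zero_mem _
    | add a b _ _ iha ihb =>
      rw [Stmt11.taylorDiff_add]
      exact Submodule.add_mem _ iha ihb
    | smul c a _ ih =>
      rw [Stmt11.taylorDiff_smul]
      exact Submodule.smul_mem _ _ ih
  · intro x y hy
    induction hy using Submodule.span_induction with
    | mem z hz =>
      rcases hz with ⟨U, hU, rfl⟩ | ⟨U, hU, rfl⟩
      · exact Stmt11.mem_prod_single k u κ x hU 1
      · exact ⟨Stmt11.mem_prod_taylorD_right k u κ x hU,
          Stmt11.mem_prod_taylorD_left k u κ x hU⟩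
    | zero =>
      rw [Stmt11.taylorProd_zero_right, Stmt11.taylorProd_zero_left]
      exact ⟨Submodule.zero_mem _, Submodule.zero_mem _⟩
    | add a b _ _ iha ihb =>
      rw [Stmt11.taylorProd_add_right, Stmt11.taylorProd_add_left]
      exact ⟨Submodule.add_mem _ iha.1 ihb.1, Submodule.add_mem _ iha.2 ihb.2⟩
    | smul c a _ ih =>
      rw [Stmt11.taylorProd_smul_right, Stmt11.taylorProd_smul_left]
      exact ⟨Submodule.smul_mem _ _ ih.1, Submodule.smul_mem _ _ ih.2⟩
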